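/- Let E be a CM-field that is Galois over ℚ, viewed inside ℂ, with complex conjugation c₀ ∈ Gal(E/ℚ). Let h: Σ_E → ℚ be a function with h(ῡ) = −h(υ) for all embeddings υ (where ῡ = ι∘υ). Let W ⊆ ℚ^{Σ_E} be the ℚ-span of the translated functions σ ↦ h(τ^{−1}σ) for τ ∈ Gal(E/ℚ), and let 𝔮 be the smallest ℚ-subspace of E_− = {e ∈ E : c₀(e) = −e} such that h lies in κ_E(𝔮 ⊗_ℚ ℂ). Then dim_ℚ 𝔮 = dim_ℚ W. -/

import Mathlib

set_option synthInstance.maxHeartbeats 400000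
set_option maxHeartbeats 1600000

section Aux

variable {k K : Type*} [Field k] [Field K] [Algebra k K]

theorem aux_li {ι κ : Type*} {v : κ → ι → k} (hv : LinearIndependent k v) :
    LinearIndependent K (fun j i => algebraMap k K (v j i)) := by
  classical
  rw [linearIndependent_iff']
  intro s g hsum
  let B := Module.Basis.ofVectorSpace k K
  have key : ∀ m, ∀ j ∈ s, B.repr (g j) m = 0 := by
    intro m
    refine linearIndependent_iff'.mp hv s (fun j => B.repr (g j) m) ?_
    funext i
    have h1 : ∑ j ∈ s, (v j i) • g j = 0 := by
      have h0 := congrFun hsum i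
      simp only [Finset.sum_apply, Pi.smul_apply, Pi.zero_apply] at h0
      rw [← h0]
      refine Finset.sum_congr rfl fun j _ => ?_
      rw [Algebra.smul_def, mul_comm, smul_eq_mul]
    have h2 := congrArg (fun x => B.repr x m) h1
    simp only [map_sum, map_smul, Finsupp.coe_finset_sum, Finset.sum_apply,
      Finsupp.smul_apply, smul_eq_mul, map_zero, Finsupp.coe_zero, Pi.zero_apply] at h2
    simpa [Finset.sum_apply, mul_comm] using h2
  intro j hj
  have hrepr : B.repr (g j) = 0 := Finsupp.ext fun m => key m j hj
  exact (LinearEquiv.map_eq_zero_iff B.repr).mp hrepr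

theorem aux_mem_span {ι : Type*} {s : Set (ι → k)} {x : ι → k} (hx : x ∈ Submodule.span k s) :
    (fun i => algebraMap k K (x i)) ∈ Submodule.span K ((fun v i => algebraMap k K (v i)) '' s) := by
  induction hx using Submodule.span_induction with
  | mem y hy => exact Submodule.subset_span ⟨y, hy, rfl⟩
  | zero =>
      have : (fun i => algebraMap k K ((0 : ι → k) i)) = 0 := by funext i; simp
      rw [this]; exact Submodule.zero_mem _
  | add y z _ _ hy hz =>
      have : (fun i => algebraMap k K ((y + z) i))
          = (fun i => algebraMap k K (y i)) + fun i => algebraMap k K (z i) := by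
        funext i; simp
      rw [this]; exact Submodule.add_mem _ hy hz
  | smul a y _ hy =>
      have : (fun i => algebraMap k K ((a • y) i))
          = algebraMap k K a • fun i => algebraMap k K (y i) := by
        funext i; simp [Algebra.smul_def]
      rw [this]; exact Submodule.smul_mem _ _ hy

theorem aux_rank {ι : Type*} [Fintype ι] {s : Set (ι → k)} (hs : s.Finite) :
    Module.finrank K (Submodule.span K ((fun v i => algebraMap k K (v i)) '' s))
      = Module.finrank k (Submodule.span k s) := by
  classical
  obtain ⟨t, hts, hspan, hli⟩ := exists_linearIndependent k s
  haveI : Fintype t := (hs.subset hts).fintype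
  have himg : Submodule.span K ((fun v i => algebraMap k K (v i)) '' s)
      = Submodule.span K ((fun v i => algebraMap k K (v i)) '' t) := by
    apply le_antisymm
    · rw [Submodule.span_le]
      rintro _ ⟨y, hy, rfl⟩
      have hy' : y ∈ Submodule.span k t := hspan ▸ Submodule.subset_span hy
      exact aux_mem_span (K := K) hy'
    · exact Submodule.span_mono (Set.image_mono hts)
  have hJinj : Function.Injective (fun (v : ι → k) => (fun i => algebraMap k K (v i))) := by
    intro a c hac
    funext i
    exact (algebraMap k K).injective (congrFun hac i)
  haveI : Fintype ((fun (v : ι → k) => (fun i => algebraMap k K (v i))) '' t) :=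
    ((hs.subset hts).image _).fintype
  have hliK : LinearIndependent K
      ((↑) : ((fun (v : ι → k) => (fun i => algebraMap k K (v i))) '' t) → (ι → K)) := by
    have h1 : LinearIndependent K (fun x : t => (fun i => algebraMap k K ((x : ι → k) i))) :=
      aux_li (K := K) hli
    exact LinearIndepOn.id_image (v := fun (v : ι → k) (i : ι) => algebraMap k K (v i)) (s := t) h1
  rw [himg, ← hspan]
  have e1 : Submodule.span K ((fun v i => algebraMap k K (v i)) '' t)
      = Submodule.span K ((fun (v : ι → k) => (fun i => algebraMap k K (v i))) '' t) := rfl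
  rw [e1, finrank_span_set_eq_card hliK, finrank_span_set_eq_card hli]
  rw [Set.toFinset_image]
  exact Finset.card_image_of_injective _ hJinj

theorem aux_descend {ι : Type*} [Fintype ι] {s : Set (ι → k)} (hs : s.Finite) {x : ι → k}
    (hx : (fun i => algebraMap k K (x i)) ∈
      Submodule.span K ((fun v i => algebraMap k K (v i)) '' s)) :
    x ∈ Submodule.span k s := by
  have h1 := aux_rank (K := K) (ι := ι) hs
  have h2 := aux_rank (K := K) (ι := ι) (hs.insert x)
  rw [Set.image_insert_eq, Submodule.span_insert_eq_span hx, h1] at h2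
  have hle : Submodule.span k s ≤ Submodule.span k (insert x s) :=
    Submodule.span_mono (Set.subset_insert x s)
  have heq : Submodule.span k s = Submodule.span k (insert x s) :=
    Submodule.eq_of_le_of_finrank_le hle (le_of_eq h2.symm)
  rw [heq]
  exact Submodule.subset_span (Set.mem_insert x s)

theorem aux_span_image {R A M N : Type*} [CommRing R] [CommRing A] [Algebra R A]
    [AddCommGroup M] [Module R M] [AddCommGroup N] [Module R N] [Module A N]
    [IsScalarTower R A N] (f : M →ₗ[R] N) (S : Set M) :
    Submodule.span A (f '' (Submodule.span R S : Set M)) = Submodule.span A (f '' S) := by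
  apply le_antisymm
  · rw [Submodule.span_le]
    rintro _ ⟨y, hy, rfl⟩
    induction hy using Submodule.span_induction with
    | mem z hz => exact Submodule.subset_span ⟨z, hz, rfl⟩
    | zero => rw [map_zero]; exact Submodule.zero_mem _
    | add y z _ _ hy hz => rw [map_add]; exact Submodule.add_mem _ hy hz
    | smul a y _ hy =>
        rw [map_smul, ← algebraMap_smul A a (f y)]
        exact Submodule.smul_mem _ _ hy
  · exact Submodule.span_mono (Set.image_mono Submodule.subset_span)

end Aux

set_option maxHeartbeats 4000000 in
/-- Let `E ⊆ ℂ` be a CM-field, Galois over ℚ, with complex conjugation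
`c₀ ∈ Gal(E/ℚ)` (so that `c₀` is induced by the complex conjugation of ℂ). Since `E/ℚ`
is Galois, the embeddings `Σ_E` are identified with `Gal(E/ℚ)`. Let `h : Gal(E/ℚ) → ℚ`
satisfy `h(c₀σ) = −h(σ)` (i.e. `h(σ̄) = −h(σ)`), let `W` be the ℚ-span of the translates
`σ ↦ h(τ⁻¹σ)`, and let `𝔮` be the smallest ℚ-subspace of `E₋ = {e : c₀ e = −e}` such
that `h` lies in `κ_E(𝔮 ⊗ ℂ)` (the ℂ-span of the functions `σ ↦ σ(e)`, `e ∈ 𝔮`). Then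
`dim_ℚ 𝔮 = dim_ℚ W`. -/
theorem stmt16 (E : IntermediateField ℚ ℂ) [FiniteDimensional ℚ E] [IsGalois ℚ E]
    (c₀ : E ≃ₐ[ℚ] E)
    (hc₀ : ∀ x : E, ((c₀ x : E) : ℂ) = starRingEnd ℂ (x : ℂ))
    (h : (E ≃ₐ[ℚ] E) → ℚ)
    (hodd : ∀ σ : E ≃ₐ[ℚ] E, h (c₀ * σ) = - h σ)
    (q : Submodule ℚ E)
    (hqneg : ∀ e ∈ q, c₀ e = -e)
    (hqmem : (fun σ : E ≃ₐ[ℚ] E => (h σ : ℂ)) ∈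
      Submodule.span ℂ ((fun e : E => fun σ : E ≃ₐ[ℚ] E => ((σ e : E) : ℂ)) '' q))
    (hqmin : ∀ q' : Submodule ℚ E, (∀ e ∈ q', c₀ e = -e) →
      ((fun σ : E ≃ₐ[ℚ] E => (h σ : ℂ)) ∈
        Submodule.span ℂ ((fun e : E => fun σ : E ≃ₐ[ℚ] E => ((σ e : E) : ℂ)) '' q')) →
      q ≤ q') :
    Module.finrank ℚ q
      = Module.finrank ℚ (Submodule.span ℚ
          (Set.range fun τ : E ≃ₐ[ℚ] E => fun σ : E ≃ₐ[ℚ] E => h (τ⁻¹ * σ))) := by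
  classical
  -- ℚ-basis of E indexed by the Galois group
  have hcard : Fintype.card (E ≃ₐ[ℚ] E) = Module.finrank ℚ E := by
    rw [← Nat.card_eq_fintype_card]; exact IsGalois.card_aut_eq_finrank ℚ E
  let b : Module.Basis (E ≃ₐ[ℚ] E) ℚ E :=
    (Module.finBasis ℚ E).reindex (Fintype.equivFinOfCardEq hcard).symm
  let M : Matrix (E ≃ₐ[ℚ] E) (E ≃ₐ[ℚ] E) E := Matrix.of fun σ j => σ (b j)
  -- Dedekind's theorem: the matrix (σ (b j)) is invertible
  have hdet : IsUnit M.det := by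
    rw [isUnit_iff_ne_zero]
    intro h0
    obtain ⟨c, hc0, hcM⟩ := Matrix.exists_vecMul_eq_zero_iff.mpr h0
    have hψ : ∀ e : E, ∑ σ : E ≃ₐ[ℚ] E, c σ * σ e = 0 := by
      have hb : ∀ j, ∑ σ : E ≃ₐ[ℚ] E, c σ * σ (b j) = 0 := by
        intro j
        have := congrFun hcM j
        simpa [Matrix.vecMul, dotProduct, M] using this
      let ψ : E →ₗ[ℚ] E := ∑ σ : E ≃ₐ[ℚ] E, c σ • (σ : E ≃ₐ[ℚ] E).toLinearMap
      have hψ0 : ψ = 0 := by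
        apply b.ext
        intro j
        simpa [ψ, LinearMap.sum_apply, smul_eq_mul] using hb j
      intro e
      have := LinearMap.congr_fun hψ0 e
      simpa [ψ, LinearMap.sum_apply, smul_eq_mul] using this
    have hli : LinearIndependent E
        (fun σ : E ≃ₐ[ℚ] E => ⇑(MonoidHomClass.toMonoidHom σ) : (E ≃ₐ[ℚ] E) → (E → E)) := by
      refine (linearIndependent_monoidHom E E).comp
        (fun σ : E ≃ₐ[ℚ] E => MonoidHomClass.toMonoidHom σ) ?_
      intro σ τ hst
      ext x
      simpa using DFunLike.congr_fun hst x
    have := Fintype.linearIndependent_iff.mp hli c ?_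
    · exact hc0 (funext this)
    · funext e
      simpa [Finset.sum_apply, smul_eq_mul] using hψ e
  -- the fundamental identity: M ∘ (coordinates) = (σ ↦ σ e)
  have hfE : ∀ e : E, M.mulVec (fun j => algebraMap ℚ E (b.equivFun e j))
      = fun σ : E ≃ₐ[ℚ] E => σ e := by
    intro e
    funext σ
    have : (M.mulVec (fun j => algebraMap ℚ E (b.equivFun e j))) σ
        = ∑ j, b.equivFun e j • σ (b j) := by
      simp only [Matrix.mulVec, dotProduct, M, Matrix.of_apply]
      refine Finset.sum_congr rfl fun j _ => ?_
      rw [Algebra.smul_def, mul_comm]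
    rw [this]
    have : ∑ j, b.equivFun e j • σ (b j) = σ (∑ j, b.equivFun e j • b j) := by
      rw [map_sum]
      refine Finset.sum_congr rfl fun j _ => ?_
      rw [Algebra.smul_def (b.equivFun e j) (b j), map_mul, AlgEquiv.commutes, ← Algebra.smul_def]
    rw [this, b.sum_equivFun]
  -- finite spanning set of q
  let e_ : Fin (Module.finrank ℚ q) → E := fun i => ((Module.finBasis ℚ q) i : E)
  let sqset : Set E := Set.range e_
  have hsq : Submodule.span ℚ sqset = q := by
    have h1 : sqset = q.subtype '' (Set.range (Module.finBasis ℚ q)) := by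
      rw [← Set.range_comp]; rfl
    rw [h1, Submodule.span_image, Module.Basis.span_eq, Submodule.map_subtype_top]
  -- the ℚ-linear map e ↦ (σ ↦ σ e) into ℂ-valued functions
  let fC : E →ₗ[ℚ] ((E ≃ₐ[ℚ] E) → ℂ) :=
    { toFun := fun e => fun σ => ((σ e : E) : ℂ)
      map_add' := by
        intro x y; funext σ; simp [map_add]
      map_smul' := by
        intro r x; funext σ
        show ((σ (r • x) : E) : ℂ) = r • ((σ x : E) : ℂ)
        rw [Algebra.smul_def, map_mul, AlgEquiv.commutes, Rat.smul_def]
        push_cast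
        congr 1 }
  have hfCq : ∀ (S : Set E),
      Submodule.span ℂ ((fun e : E => fun σ : E ≃ₐ[ℚ] E => ((σ e : E) : ℂ)) '' S)
        = Submodule.span ℂ (fC '' S) := fun S => rfl
  -- reduce the coefficients of h from ℂ to E
  have hmem1 : (fun σ : E ≃ₐ[ℚ] E => algebraMap ℚ E (h σ)) ∈
      Submodule.span E ((fun e : E => fun σ : E ≃ₐ[ℚ] E => σ e) '' sqset) := by
    apply aux_descend (K := ℂ) (s := (fun e : E => fun σ : E ≃ₐ[ℚ] E => σ e) '' sqset)
      ((Set.finite_range e_).image _)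
    have himg : ((fun (v : (E ≃ₐ[ℚ] E) → E) (i : E ≃ₐ[ℚ] E) => algebraMap E ℂ (v i)) ''
        ((fun e : E => fun σ : E ≃ₐ[ℚ] E => σ e) '' sqset))
        = ((fun e : E => fun σ : E ≃ₐ[ℚ] E => ((σ e : E) : ℂ)) '' sqset) := by
      rw [← Set.image_comp]; rfl
    rw [himg]
    have hx : (fun (i : E ≃ₐ[ℚ] E) =>
          algebraMap E ℂ ((fun σ : E ≃ₐ[ℚ] E => algebraMap ℚ E (h σ)) i))
        = fun σ : E ≃ₐ[ℚ] E => ((h σ : ℚ) : ℂ) := by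
      funext σ
      exact eq_ratCast (algebraMap ℚ ℂ) (h σ)
    rw [hx]
    have hmem := hqmem
    rw [hfCq (↑q : Set E)] at hmem
    rw [hfCq sqset, ← aux_span_image fC sqset, hsq]
    exact hmem
  have hrange1 : ((fun e : E => fun σ : E ≃ₐ[ℚ] E => σ e) '' sqset)
      = Set.range (fun i => fun σ : E ≃ₐ[ℚ] E => σ (e_ i)) := (Set.range_comp _ e_).symm
  rw [hrange1] at hmem1
  obtain ⟨z, hz⟩ := (Submodule.mem_span_range_iff_exists_fun E).mp hmem1
  -- the coordinate vector of h and its Galois translates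
  let ζ : (E ≃ₐ[ℚ] E) → E := ∑ i, z i • (fun j => algebraMap ℚ E (b.equivFun (e_ i) j))
  let w : (E ≃ₐ[ℚ] E) → ((E ≃ₐ[ℚ] E) → E) := fun τ => fun j => τ (ζ j)
  have hwdecomp : ∀ τ : E ≃ₐ[ℚ] E,
      w τ = ∑ i, τ (z i) • (fun j => algebraMap ℚ E (b.equivFun (e_ i) j)) := by
    intro τ
    funext j
    simp only [w, ζ, Finset.sum_apply, Pi.smul_apply, smul_eq_mul, map_sum, map_mul,
      AlgEquiv.commutes]
  have hwM : ∀ τ : E ≃ₐ[ℚ] E, M.mulVec (w τ) = fun σ => algebraMap ℚ E (h (τ⁻¹ * σ)) := by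
    intro τ
    funext σ
    have h1 : M.mulVec (w τ) σ = ∑ i, τ (z i) * σ (e_ i) := by
      rw [hwdecomp τ]
      have : M.mulVec (∑ i, τ (z i) • (fun j => algebraMap ℚ E (b.equivFun (e_ i) j)))
          = ∑ i, τ (z i) • (fun σ : E ≃ₐ[ℚ] E => σ (e_ i)) := by
        rw [show M.mulVec (∑ i, τ (z i) • (fun j => algebraMap ℚ E (b.equivFun (e_ i) j)))
            = M.mulVecLin (∑ i, τ (z i) • (fun j => algebraMap ℚ E (b.equivFun (e_ i) j)))
          from rfl]
        rw [map_sum]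
        refine Finset.sum_congr rfl fun i _ => ?_
        rw [map_smul, Matrix.mulVecLin_apply, hfE (e_ i)]
      rw [this]
      simp [Finset.sum_apply]
    have h2 := congrFun hz (τ⁻¹ * σ)
    simp only [Finset.sum_apply, Pi.smul_apply, smul_eq_mul] at h2
    have h3 := congrArg τ h2
    rw [map_sum, AlgEquiv.commutes] at h3
    rw [h1, ← h3]
    refine Finset.sum_congr rfl fun i _ => ?_
    rw [map_mul, ← AlgEquiv.mul_apply, mul_inv_cancel_left]
  -- the ℚ-structure
  let JqL : ((E ≃ₐ[ℚ] E) → ℚ) →ₗ[ℚ] ((E ≃ₐ[ℚ] E) → E) :=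
    (Algebra.linearMap ℚ E).compLeft (E ≃ₐ[ℚ] E)
  have hJqL : ∀ a : (E ≃ₐ[ℚ] E) → ℚ, JqL a = fun j => algebraMap ℚ E (a j) := fun a => rfl
  let Z : Submodule E ((E ≃ₐ[ℚ] E) → E) := Submodule.span E (Set.range w)
  let Z₀ : Submodule ℚ ((E ≃ₐ[ℚ] E) → ℚ) := (Z.restrictScalars ℚ).comap JqL
  have hstab : ∀ (τ : E ≃ₐ[ℚ] E) (u) (_ : u ∈ Z), (fun j => τ (u j)) ∈ Z := by
    intro τ u hu
    induction hu using Submodule.span_induction with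
    | mem v hv =>
        obtain ⟨ρ, rfl⟩ := hv
        refine Submodule.subset_span ⟨τ * ρ, ?_⟩
        funext j
        simp [w, AlgEquiv.mul_apply]
    | zero =>
        have hz0 : (fun j => τ ((0 : (E ≃ₐ[ℚ] E) → E) j)) = 0 := by funext j; simp
        rw [hz0]; exact Z.zero_mem
    | add u v _ _ hu hv =>
        have hzadd : (fun j => τ ((u + v) j)) = (fun j => τ (u j)) + fun j => τ (v j) := by
          funext j; simp
        rw [hzadd]; exact Z.add_mem hu hv
    | smul a u _ hu =>
        have hzs : (fun j => τ ((a • u) j)) = τ a • fun j => τ (u j) := by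
          funext j; simp [smul_eq_mul]
        rw [hzs]; exact Z.smul_mem _ hu
  -- Galois descent : Z is spanned by its rational points
  have hdescent : Z ≤ Submodule.span E (JqL '' (Z₀ : Set ((E ≃ₐ[ℚ] E) → ℚ))) := by
    intro u hu
    obtain ⟨c, hc⟩ :=
      (Matrix.mulVec_surjective_iff_isUnit.mpr ((Matrix.isUnit_iff_isUnit_det M).mpr hdet))
        (Pi.single 1 1)
    have hfix : ∀ x : E, ∀ j, ∃ r : ℚ, algebraMap ℚ E r
        = ∑ τ : E ≃ₐ[ℚ] E, τ x * τ (u j) := by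
      intro x j
      have hmemb : (∑ τ : E ≃ₐ[ℚ] E, τ x * τ (u j)) ∈ (⊥ : IntermediateField ℚ E) := by
        have htfae0 := (IsGalois.tfae (F := ℚ) (E := ↥E)).out 0 1
        have htfae := htfae0.mp inferInstance
        rw [← htfae]
        have hgen : ∀ g : E ≃ₐ[ℚ] E,
            g • (∑ τ : E ≃ₐ[ℚ] E, τ x * τ (u j)) = ∑ τ : E ≃ₐ[ℚ] E, τ x * τ (u j) := by
          intro g
          rw [AlgEquiv.smul_def, map_sum]
          refine Fintype.sum_equiv (Equiv.mulLeft g) _ _ ?_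
          intro τ
          simp only [map_mul, ← AlgEquiv.mul_apply, Equiv.coe_mulLeft]
        rintro ⟨g, -⟩
        exact hgen g
      obtain ⟨r, hr⟩ := IntermediateField.mem_bot.mp hmemb
      exact ⟨r, hr⟩
    have havg_in : ∀ x : E,
        (∑ τ : E ≃ₐ[ℚ] E, τ x • (fun j => τ (u j))) ∈
          Submodule.span E (JqL '' (Z₀ : Set ((E ≃ₐ[ℚ] E) → ℚ))) := by
      intro x
      choose r hr using hfix x
      have hZmem : (∑ τ : E ≃ₐ[ℚ] E, τ x • (fun j => τ (u j))) ∈ Z :=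
        Submodule.sum_mem _ fun τ _ => Z.smul_mem _ (hstab τ u hu)
      have hra : JqL r = ∑ τ : E ≃ₐ[ℚ] E, τ x • (fun j => τ (u j)) := by
        funext j
        rw [hJqL]
        simp only [Finset.sum_apply, Pi.smul_apply, smul_eq_mul]
        exact hr j
      have hrZ : r ∈ Z₀ := by
        show JqL r ∈ Z.restrictScalars ℚ
        rw [hra]; exact hZmem
      rw [← hra]
      exact Submodule.subset_span ⟨r, hrZ, rfl⟩
    have hu' : u = ∑ jb : E ≃ₐ[ℚ] E, c jb •
        ∑ τ : E ≃ₐ[ℚ] E, τ (b jb) • (fun j => τ (u j)) := by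
      funext j
      simp only [Finset.sum_apply, Pi.smul_apply, smul_eq_mul]
      calc u j = ∑ τ : E ≃ₐ[ℚ] E, (M.mulVec c) τ * τ (u j) := by
              rw [hc, Finset.sum_eq_single (1 : E ≃ₐ[ℚ] E)]
              · simp
              · intro τ _ hτ
                rw [Pi.single_eq_of_ne hτ, zero_mul]
              · intro habs; exact absurd (Finset.mem_univ _) habs
        _ = ∑ τ : E ≃ₐ[ℚ] E, ∑ jb : E ≃ₐ[ℚ] E, c jb * (τ (b jb) * τ (u j)) := by
              refine Finset.sum_congr rfl fun τ _ => ?_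
              rw [Matrix.mulVec, dotProduct, Finset.sum_mul]
              refine Finset.sum_congr rfl fun jb _ => ?_
              show M τ jb * c jb * τ (u j) = _
              simp only [M, Matrix.of_apply]
              ring
        _ = ∑ jb : E ≃ₐ[ℚ] E, ∑ τ : E ≃ₐ[ℚ] E, c jb * (τ (b jb) * τ (u j)) :=
              Finset.sum_comm
        _ = ∑ jb : E ≃ₐ[ℚ] E, c jb * ∑ τ : E ≃ₐ[ℚ] E, τ (b jb) * τ (u j) := by
              refine Finset.sum_congr rfl fun jb _ => ?_
              rw [Finset.mul_sum]
    rw [hu']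
    exact Submodule.sum_mem _ fun jb _ => Submodule.smul_mem _ _ (havg_in (b jb))
  have hZeq : Z = Submodule.span E (JqL '' (Z₀ : Set ((E ≃ₐ[ℚ] E) → ℚ))) := by
    refine le_antisymm hdescent ?_
    rw [Submodule.span_le]
    rintro _ ⟨a, ha, rfl⟩
    exact ha
  -- the rational subspace q₀ corresponding to Z₀
  let γ : E ≃ₗ[ℚ] ((E ≃ₐ[ℚ] E) → ℚ) := b.equivFun
  let q₀ : Submodule ℚ E := Z₀.map (γ.symm : ((E ≃ₐ[ℚ] E) → ℚ) →ₗ[ℚ] E)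
  have hw1 : w 1 = ζ := by funext j; simp [w]
  -- q₀ ≤ q
  have hZle : Z ≤ Submodule.span E (⇑JqL '' (Set.range fun i => γ (e_ i))) := by
    apply Submodule.span_le.mpr
    rintro _ ⟨τ, rfl⟩
    rw [hwdecomp τ]
    apply Submodule.sum_mem
    intro i _
    apply Submodule.smul_mem
    refine Submodule.subset_span ⟨γ (e_ i), ⟨i, rfl⟩, ?_⟩
    rw [hJqL]
  have hq₀q : q₀ ≤ q := by
    rintro _ ⟨a, haZ₀, rfl⟩
    have h1 : JqL a ∈ Submodule.span E (⇑JqL '' (Set.range fun i => γ (e_ i))) :=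
      hZle haZ₀
    have h2 : a ∈ Submodule.span ℚ (Set.range fun i => γ (e_ i)) := by
      apply aux_descend (K := E) (Set.finite_range _)
      exact h1
    have h3 : a ∈ Submodule.map (γ : E →ₗ[ℚ] ((E ≃ₐ[ℚ] E) → ℚ)) q := by
      rw [← hsq, Submodule.map_span]
      have hrγ : (Set.range fun i => γ (e_ i)) = ⇑γ '' sqset := by
        rw [show (fun i => γ (e_ i)) = ⇑γ ∘ e_ from rfl, Set.range_comp]
      rwa [hrγ] at h2
    obtain ⟨e, he, hae⟩ := h3
    have : (γ.symm : ((E ≃ₐ[ℚ] E) → ℚ) →ₗ[ℚ] E) a = e := by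
      rw [← hae]; exact γ.symm_apply_apply e
    rwa [this]
  -- h lies in the span coming from q₀
  have hζZ : ζ ∈ Z := Submodule.subset_span ⟨1, hw1⟩
  have himgS : ∀ S : Set E,
      ((fun (v : (E ≃ₐ[ℚ] E) → E) (i : E ≃ₐ[ℚ] E) => algebraMap E ℂ (v i)) ''
        ((fun e : E => fun σ : E ≃ₐ[ℚ] E => σ e) '' S))
        = ((fun e : E => fun σ : E ≃ₐ[ℚ] E => ((σ e : E) : ℂ)) '' S) := by
    intro S
    rw [← Set.image_comp]; rfl
  have hmemq₀ : (fun σ : E ≃ₐ[ℚ] E => (h σ : ℂ)) ∈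
      Submodule.span ℂ ((fun e : E => fun σ : E ≃ₐ[ℚ] E => ((σ e : E) : ℂ)) '' q₀) := by
    have h1 : ζ ∈ Submodule.span E (⇑JqL '' (Z₀ : Set ((E ≃ₐ[ℚ] E) → ℚ))) := hZeq ▸ hζZ
    have h2 : M.mulVecLin ζ ∈
        Submodule.span E (⇑M.mulVecLin '' (⇑JqL '' (Z₀ : Set ((E ≃ₐ[ℚ] E) → ℚ)))) := by
      rw [← Submodule.map_span]
      exact Submodule.mem_map_of_mem h1
    have h3 : M.mulVecLin ζ = fun σ : E ≃ₐ[ℚ] E => algebraMap ℚ E (h σ) := by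
      rw [Matrix.mulVecLin_apply, ← hw1, hwM 1]
      funext σ
      rw [inv_one, one_mul]
    have h4 : (⇑M.mulVecLin '' (⇑JqL '' (Z₀ : Set ((E ≃ₐ[ℚ] E) → ℚ))))
        ⊆ (fun e : E => fun σ : E ≃ₐ[ℚ] E => σ e) '' (q₀ : Set E) := by
      rintro _ ⟨_, ⟨a, haZ₀, rfl⟩, rfl⟩
      refine ⟨(γ.symm : ((E ≃ₐ[ℚ] E) → ℚ) →ₗ[ℚ] E) a, ⟨a, haZ₀, rfl⟩, ?_⟩
      have h5 : (fun j => algebraMap ℚ E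
          (b.equivFun ((γ.symm : ((E ≃ₐ[ℚ] E) → ℚ) →ₗ[ℚ] E) a) j)) = JqL a := by
        funext j
        rw [hJqL]
        congr 1
        exact congrFun (γ.apply_symm_apply a) j
      have h6 := hfE ((γ.symm : ((E ≃ₐ[ℚ] E) → ℚ) →ₗ[ℚ] E) a)
      rw [h5] at h6
      rw [Matrix.mulVecLin_apply]
      exact h6.symm
    have h7 : (fun σ : E ≃ₐ[ℚ] E => algebraMap ℚ E (h σ)) ∈
        Submodule.span E ((fun e : E => fun σ : E ≃ₐ[ℚ] E => σ e) '' (q₀ : Set E)) := by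
      rw [← h3]
      exact Submodule.span_mono h4 h2
    have h8 := aux_mem_span (K := ℂ) h7
    rw [himgS] at h8
    have hx : (fun (i : E ≃ₐ[ℚ] E) =>
          algebraMap E ℂ ((fun σ : E ≃ₐ[ℚ] E => algebraMap ℚ E (h σ)) i))
        = fun σ : E ≃ₐ[ℚ] E => ((h σ : ℚ) : ℂ) := by
      funext σ
      exact eq_ratCast (algebraMap ℚ ℂ) (h σ)
    rwa [hx] at h8
  -- q = q₀
  have heq : q = q₀ := le_antisymm (hqmin q₀ (fun e he => hqneg e (hq₀q he)) hmemq₀) hq₀q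
  -- rank computations
  have hr1 : Module.finrank ℚ q = Module.finrank ℚ Z₀ := by
    rw [heq]
    exact LinearEquiv.finrank_map_eq γ.symm Z₀
  have hr2 : Module.finrank E Z = Module.finrank ℚ Z₀ := by
    let t0 : Fin (Module.finrank ℚ Z₀) → ((E ≃ₐ[ℚ] E) → ℚ) :=
      fun i => ((Module.finBasis ℚ Z₀) i : (E ≃ₐ[ℚ] E) → ℚ)
    have ht0 : Submodule.span ℚ (Set.range t0) = Z₀ := by
      have h1 : Set.range t0 = Z₀.subtype '' (Set.range (Module.finBasis ℚ Z₀)) := by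
        rw [← Set.range_comp]; rfl
      rw [h1, Submodule.span_image, Module.Basis.span_eq, Submodule.map_subtype_top]
    have h2 : Submodule.span E (⇑JqL '' (Z₀ : Set ((E ≃ₐ[ℚ] E) → ℚ)))
        = Submodule.span E (⇑JqL '' Set.range t0) := by
      conv_lhs => rw [← ht0]
      exact aux_span_image JqL (Set.range t0)
    rw [hZeq, h2]
    have hfin := aux_rank (k := ℚ) (K := E) (s := Set.range t0) (Set.finite_range t0)
    rw [ht0] at hfin
    exact hfin
  have hr3 : Module.finrank ℚ (Submodule.span ℚ
      (Set.range fun τ : E ≃ₐ[ℚ] E => fun σ : E ≃ₐ[ℚ] E => h (τ⁻¹ * σ)))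
      = Module.finrank E Z := by
    have hstep := (aux_rank (k := ℚ) (K := E)
      (s := Set.range fun τ : E ≃ₐ[ℚ] E => fun σ : E ≃ₐ[ℚ] E => h (τ⁻¹ * σ))
      (Set.finite_range _)).symm
    rw [hstep]
    have h1 : ((fun (v : (E ≃ₐ[ℚ] E) → ℚ) (i : E ≃ₐ[ℚ] E) => algebraMap ℚ E (v i)) ''
        (Set.range fun τ : E ≃ₐ[ℚ] E => fun σ : E ≃ₐ[ℚ] E => h (τ⁻¹ * σ)))
        = Set.range (fun τ : E ≃ₐ[ℚ] E => M.mulVec (w τ)) := by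
      rw [← Set.range_comp]
      apply congrArg Set.range
      funext τ
      rw [hwM τ]
      rfl
    have h2 : Set.range (fun τ : E ≃ₐ[ℚ] E => M.mulVec (w τ))
        = ⇑M.mulVecLin '' Set.range w := by
      rw [← Set.range_comp]
      rfl
    rw [h1, h2, Submodule.span_image]
    have hinj : Function.Injective M.mulVecLin := by
      have hmv : Function.Injective M.mulVec :=
        Matrix.mulVec_injective_iff_isUnit.mpr ((Matrix.isUnit_iff_isUnit_det M).mpr hdet)
      intro a b hab
      apply hmv
      rwa [← Matrix.mulVecLin_apply, ← Matrix.mulVecLin_apply]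
    exact (LinearEquiv.finrank_eq
      (Submodule.equivMapOfInjective M.mulVecLin hinj
        (Submodule.span E (Set.range w)))).symm
  rw [hr1, ← hr2, hr3]
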